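/- Let i, j ∈ ℕ₀, let 2 ≤ a ≤ (p−1)/2, and let o_a denote the multiplicative order of a·(1−a)^{−1} in the group of units of ℤ/pℤ. Then the ideal of O generated by {ϑ_a(x, y) : x ∈ 𝔭^i, y ∈ 𝔭^j} equals 𝔭^{i+j+ε(i,j)}, where ε(i,j) = 1 if o_a divides i−j and ε(i,j) = 0 otherwise. -/

import Mathlib

set_option synthInstance.maxHeartbeats 1000000
set_option maxHeartbeats 1000000

namespace MaximalClassFrame

variable (p : ℕ) [Fact p.Prime]
variable (K : Type) [Field K] [Algebra ℚ_[p] K] [Algebra ℤ_[p] K]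
  [IsScalarTower ℤ_[p] ℚ_[p] K]

/-- The maximal order `𝒪` of `K`: the integral closure of `ℤ_p` in `K`. -/
noncomputable abbrev 𝒪 : Subalgebra ℤ_[p] K := integralClosure ℤ_[p] K

variable (θ : 𝒪 p K)

/-- The maximal ideal `𝔭` of `𝒪`, generated by `κ = θ - 1`. -/
noncomputable def pid : Ideal (𝒪 p K) := Ideal.span {θ - 1}

/-- A `ℤ_p`-bilinear map `γ : 𝒪 × 𝒪 → 𝒪` is `P`-equivariant if it is
alternating and satisfies `γ(θx, θy) = θ·γ(x,y)` for all `x, y`. -/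
def IsPEquivariant (γ : 𝒪 p K →ₗ[ℤ_[p]] 𝒪 p K →ₗ[ℤ_[p]] 𝒪 p K) : Prop :=
  (∀ x, γ x x = 0) ∧ ∀ x y, γ (θ * x) (θ * y) = θ * γ x y

/-- `γ ∈ Ĥ_i`: the additive subgroup of `𝒪` generated by
`{γ(x,y) : x, y ∈ 𝔭^i}` equals `𝔭^(2i+1)`. -/
def InHhat (i : ℕ) (γ : 𝒪 p K →ₗ[ℤ_[p]] 𝒪 p K →ₗ[ℤ_[p]] 𝒪 p K) : Prop :=
  Submodule.span ℤ (Set.image2 (fun x y => γ x y)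
      ((pid p K θ ^ i : Ideal (𝒪 p K)) : Set (𝒪 p K))
      ((pid p K θ ^ i : Ideal (𝒪 p K)) : Set (𝒪 p K)))
    = (pid p K θ ^ (2 * i + 1)).restrictScalars ℤ

variable (σ : ℤ → (K →ₐ[ℚ_[p]] K))

/-- The map `ϑ_a(x,y) = σ_a(x)·σ_{1-a}(y) − σ_{1-a}(x)·σ_a(y)` on `K × K`. -/
noncomputable def thetaMap (a : ℤ) : K → K → K :=
  fun x y => σ a x * σ (1 - a) y - σ (1 - a) x * σ a y

end MaximalClassFrame

set_option linter.unusedSectionVars false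

namespace MaximalClassFrame
variable (p : ℕ) [Fact p.Prime]
variable (K : Type) [Field K] [Algebra ℚ_[p] K] [Algebra ℤ_[p] K]
  [IsScalarTower ℤ_[p] ℚ_[p] K]
variable (θ : 𝒪 p K)

open Polynomial in
/-- The shifted cyclotomic (Eisenstein) polynomial `((X+1)^p - 1)/X` over `ℤ_p`. -/
noncomputable def gpoly : Polynomial ℤ_[p] :=
  ∑ k ∈ Finset.range p, Polynomial.monomial k ((p.choose (k+1) : ℤ_[p]))

lemma gpoly_coeff (n : ℕ) :
    (gpoly p).coeff n = if n < p then ((p.choose (n+1) : ℤ_[p])) else 0 := by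
  simp only [gpoly, Polynomial.finset_sum_coeff, Polynomial.coeff_monomial,
    Finset.sum_ite_eq', Finset.mem_range]

lemma gpoly_natDegree_le : (gpoly p).natDegree ≤ p - 1 := by
  have hp1 : 1 ≤ p := (Fact.out : p.Prime).one_lt.le
  rw [Polynomial.natDegree_le_iff_coeff_eq_zero]
  intro m hm
  rw [gpoly_coeff, if_neg (by omega)]

lemma gpoly_coeff_top : (gpoly p).coeff (p - 1) = 1 := by
  have hp1 : 1 ≤ p := (Fact.out : p.Prime).one_lt.le
  rw [gpoly_coeff, if_pos (by omega), Nat.sub_add_cancel hp1, Nat.choose_self, Nat.cast_one]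

lemma gpoly_monic : (gpoly p).Monic :=
  Polynomial.monic_of_natDegree_le_of_coeff_eq_one (p-1) (gpoly_natDegree_le p) (gpoly_coeff_top p)

lemma gpoly_natDegree : (gpoly p).natDegree = p - 1 :=
  le_antisymm (gpoly_natDegree_le p) (Polynomial.le_natDegree_of_ne_zero
    (by rw [gpoly_coeff_top]; exact one_ne_zero))

lemma gpoly_key (x : K) : x * Polynomial.aeval x (gpoly p) = (x + 1) ^ p - 1 := by
  have h1 : Polynomial.aeval x (gpoly p)
      = ∑ k ∈ Finset.range p, (p.choose (k+1) : K) * x ^ k := by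
    rw [gpoly, map_sum]
    refine Finset.sum_congr rfl fun k _ => ?_
    rw [Polynomial.aeval_monomial]
    push_cast
    ring
  have h2 : (x + 1) ^ p = ∑ m ∈ Finset.range (p+1), x ^ m * 1 ^ (p - m) * (p.choose m : K) := by
    exact_mod_cast add_pow x 1 p
  rw [h1, h2, Finset.sum_range_succ']
  simp only [one_pow, mul_one, pow_zero, Nat.choose_zero_right, Nat.cast_one, one_mul]
  rw [Finset.mul_sum]
  ring_nf

end MaximalClassFrame

namespace MaximalClassFrame
variable (p : ℕ) [Fact p.Prime]
variable (K : Type) [Field K] [Algebra ℚ_[p] K] [Algebra ℤ_[p] K]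
  [IsScalarTower ℤ_[p] ℚ_[p] K]
variable (θ : 𝒪 p K)


lemma gpoly_eisenstein : (gpoly p).IsEisensteinAt (Ideal.span {(p : ℤ_[p])}) := by
  have hp : p.Prime := Fact.out
  constructor
  · rw [Polynomial.Monic.leadingCoeff (gpoly_monic p)]
    rw [Ideal.mem_span_singleton]
    intro h
    exact (PadicInt.prime_p (p := p)).not_unit (isUnit_of_dvd_one h)
  · intro n hn
    rw [gpoly_natDegree] at hn
    rw [gpoly_coeff, if_pos (by omega), Ideal.mem_span_singleton]
    have : p ∣ p.choose (n+1) := hp.dvd_choose_self (by omega) (by omega)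
    exact_mod_cast Nat.cast_dvd_cast (α := ℤ_[p]) this
  · have hp1 : 1 ≤ p := hp.one_lt.le
    rw [gpoly_coeff, if_pos (by omega), Ideal.span_singleton_pow, Ideal.mem_span_singleton]
    simp only [zero_add, Nat.choose_one_right]
    intro h
    obtain ⟨c, hc⟩ := h
    have hpz : (p : ℤ_[p]) ≠ 0 := (PadicInt.prime_p).ne_zero
    have : (1 : ℤ_[p]) = p * c := by
      apply mul_left_cancel₀ hpz
      rw [mul_one]
      conv_lhs => rw [hc]
      ring
    exact (PadicInt.prime_p (p := p)).not_isUnit (IsUnit.of_mul_eq_one c this.symm)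

lemma gpoly_irreducible : Irreducible (gpoly p) :=
  (gpoly_eisenstein p).irreducible
    (Ideal.span_singleton_prime (PadicInt.prime_p).ne_zero |>.mpr PadicInt.prime_p)
    (gpoly_monic p).isPrimitive
    (by rw [gpoly_natDegree]; have := (Fact.out : p.Prime).one_lt; omega)

end MaximalClassFrame

namespace MaximalClassFrame
variable {p : ℕ} [Fact p.Prime]
variable {K : Type} [Field K] [Algebra ℚ_[p] K] [Algebra ℤ_[p] K]
  [IsScalarTower ℤ_[p] ℚ_[p] K]
variable {θ : 𝒪 p K}

lemma kappa_int (θ : 𝒪 p K) : IsIntegral ℤ_[p] ((θ : K) - 1) :=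
  IsIntegral.sub θ.2 isIntegral_one

lemma gpoly_aeval (hp : 5 ≤ p) (hθ : IsPrimitiveRoot (θ : K) p) :
    Polynomial.aeval ((θ : K) - 1) (gpoly p) = 0 := by
  have h := gpoly_key p K ((θ : K) - 1)
  rw [sub_add_cancel, hθ.pow_eq_one, sub_self] at h
  rcases mul_eq_zero.mp h with h | h
  · exact absurd (sub_eq_zero.mp h) (hθ.ne_one (by omega))
  · exact h

lemma minpoly_kappa (hp : 5 ≤ p) (hθ : IsPrimitiveRoot (θ : K) p) :
    minpoly ℤ_[p] ((θ : K) - 1) = gpoly p := by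
  have hQ : minpoly ℚ_[p] ((θ : K) - 1) = (gpoly p).map (algebraMap ℤ_[p] ℚ_[p]) := by
    refine (minpoly.eq_of_irreducible_of_monic ?_ ?_ ?_).symm
    · exact ((gpoly_monic p).irreducible_iff_irreducible_map_fraction_map).mp
        (gpoly_irreducible p)
    · rw [Polynomial.aeval_map_algebraMap]; exact gpoly_aeval hp hθ
    · exact (gpoly_monic p).map _
  have h2 := minpoly.isIntegrallyClosed_eq_field_fractions' ℚ_[p] (kappa_int θ)
  rw [hQ] at h2
  exact Polynomial.map_injective _ (IsFractionRing.injective ℤ_[p] ℚ_[p]) h2.symm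

lemma adjoin_kappa_top (hgen : Algebra.adjoin ℚ_[p] {(θ : K)} = ⊤) :
    Algebra.adjoin ℚ_[p] {(θ : K) - 1} = ⊤ := by
  rw [← top_le_iff, ← hgen]
  apply Algebra.adjoin_le
  intro y hy
  rw [Set.mem_singleton_iff] at hy
  subst hy
  have h := add_mem (Algebra.subset_adjoin (a := (θ : K) - 1)
    (Set.mem_singleton _)) (one_mem (Algebra.adjoin ℚ_[p] {(θ : K) - 1}))
  simpa using h

lemma integral_mem_adjoin (hp : 5 ≤ p) (hθ : IsPrimitiveRoot (θ : K) p)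
    (hgen : Algebra.adjoin ℚ_[p] {(θ : K)} = ⊤) {z : K} (hz : IsIntegral ℤ_[p] z) :
    z ∈ Algebra.adjoin ℤ_[p] {(θ : K)} := by
  set x : K := (θ : K) - 1 with hxdef
  haveI : CharZero K := charZero_of_injective_algebraMap (algebraMap ℚ_[p] K).injective
  have hxQ : IsIntegral ℚ_[p] x := (kappa_int θ).tower_top
  have hadj : Algebra.adjoin ℚ_[p] {x} = ⊤ := adjoin_kappa_top hgen
  let B : PowerBasis ℚ_[p] K :=
    (Algebra.adjoin.powerBasis hxQ).map
      ((Subalgebra.equivOfEq _ _ hadj).trans Subalgebra.topEquiv)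
  have hBgen : B.gen = x := by
    simp [B, PowerBasis.map_gen, Algebra.adjoin.powerBasis_gen]
  haveI : FiniteDimensional ℚ_[p] K := B.finite
  haveI : Algebra.IsSeparable ℚ_[p] K := inferInstance
  have main : ∀ q : Polynomial ℚ_[p], ∃ n : ℕ,
      (p : ℤ_[p]) ^ n • (Polynomial.aeval x q) ∈ Algebra.adjoin ℤ_[p] {x} := by
    intro q
    induction q using Polynomial.induction_on' with
    | add f g hf hg =>
      obtain ⟨nf, hnf⟩ := hf
      obtain ⟨ng, hng⟩ := hg
      refine ⟨nf + ng, ?_⟩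
      simp only [map_add, smul_add, pow_add, mul_smul]
      exact add_mem (by rw [smul_comm]; exact Subalgebra.smul_mem _ hnf _)
        (Subalgebra.smul_mem _ hng _)
    | monomial n c =>
      have hp2 : 2 ≤ p := (Fact.out : p.Prime).two_le
      obtain ⟨m, hm'⟩ := exists_nat_ge ‖c‖
      have hm : ‖c‖ ≤ (p : ℝ) ^ m := by
        refine hm'.trans ?_
        have h1 : m ≤ p ^ m := (Nat.lt_two_pow_self (n := m)).le.trans (Nat.pow_le_pow_left hp2 m)
        exact_mod_cast h1
      have hnorm : ‖(p : ℚ_[p]) ^ m * c‖ ≤ 1 := by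
        rw [norm_mul, norm_pow, Padic.norm_p, inv_pow]
        have hp0 : (0 : ℝ) < (p : ℝ) ^ m := by positivity
        calc ((p:ℝ)^m)⁻¹ * ‖c‖ ≤ ((p:ℝ)^m)⁻¹ * (p:ℝ)^m :=
              mul_le_mul_of_nonneg_left hm (by positivity)
          _ = 1 := inv_mul_cancel₀ hp0.ne'
      refine ⟨m, ?_⟩
      have hcoe : algebraMap ℤ_[p] K (⟨(p : ℚ_[p]) ^ m * c, hnorm⟩ : ℤ_[p])
          = algebraMap ℚ_[p] K ((p : ℚ_[p]) ^ m * c) := by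
        exact IsScalarTower.algebraMap_apply ℤ_[p] ℚ_[p] K _
      have key : (p : ℤ_[p]) ^ m • Polynomial.aeval x (Polynomial.monomial n c)
          = algebraMap ℤ_[p] K (⟨(p : ℚ_[p]) ^ m * c, hnorm⟩ : ℤ_[p]) * x ^ n := by
        rw [Polynomial.aeval_monomial, Algebra.smul_def,
          IsScalarTower.algebraMap_apply ℤ_[p] ℚ_[p] K, hcoe, map_mul]
        have : algebraMap ℤ_[p] ℚ_[p] ((p : ℤ_[p]) ^ m) = (p : ℚ_[p]) ^ m := by
          rw [PadicInt.algebraMap_apply]; push_cast; rfl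
        rw [this, map_pow, mul_assoc]
      rw [key]
      exact mul_mem (Subalgebra.algebraMap_mem _ _)
        (pow_mem (Algebra.self_mem_adjoin_singleton ℤ_[p] x) n)
  have hzT : z ∈ Algebra.adjoin ℚ_[p] {x} := hadj ▸ Algebra.mem_top
  rw [Algebra.adjoin_singleton_eq_range_aeval] at hzT
  obtain ⟨q, hq⟩ := hzT
  replace hq : Polynomial.aeval x q = z := hq
  obtain ⟨n, hn⟩ := main q
  rw [hq] at hn
  have hmem := mem_adjoin_of_smul_prime_pow_smul_of_minpoly_isEisensteinAt
    (B := B) PadicInt.prime_p (hBgen ▸ kappa_int θ) hz (by rw [hBgen]; exact hn)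
    (by rw [hBgen, minpoly_kappa hp hθ]; exact gpoly_eisenstein p)
  rw [hBgen] at hmem
  have hle : Algebra.adjoin ℤ_[p] {x} ≤ Algebra.adjoin ℤ_[p] {(θ : K)} := by
    apply Algebra.adjoin_le
    intro y hy
    rw [Set.mem_singleton_iff] at hy
    subst hy
    exact sub_mem (Algebra.subset_adjoin rfl) (one_mem _)
  exact hle hmem

end MaximalClassFrame

namespace MaximalClassFrame
variable {p : ℕ} [Fact p.Prime]
variable {K : Type} [Field K] [Algebra ℚ_[p] K] [Algebra ℤ_[p] K]
  [IsScalarTower ℤ_[p] ℚ_[p] K]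

/-- Geometric sums `1 + θ + ... + θ^(k-1)` in the maximal order. -/
noncomputable def Egs (θ : 𝒪 p K) (k : ℕ) : 𝒪 p K := ∑ m ∈ Finset.range k, θ ^ m

variable (θ : 𝒪 p K)

lemma kappa_mul_Egs (k : ℕ) : (θ - 1) * Egs θ k = θ ^ k - 1 := by
  rw [Egs, mul_comm, geom_sum_mul]

lemma theta_pow_p (hθ : IsPrimitiveRoot (θ : K) p) : θ ^ p = 1 := by
  have := hθ.pow_eq_one
  exact_mod_cast Subtype.ext (by push_cast; exact this)

lemma kappa_ne_zero (hp : 5 ≤ p) (hθ : IsPrimitiveRoot (θ : K) p) : θ - 1 ≠ 0 := by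
  intro h
  have h1 : ((θ - 1 : 𝒪 p K) : K) = 0 := by rw [h]; rfl
  push_cast at h1
  exact hθ.ne_one (by omega) (sub_eq_zero.mp h1)

lemma Egs_p (hp : 5 ≤ p) (hθ : IsPrimitiveRoot (θ : K) p) : Egs θ p = 0 := by
  have h := kappa_mul_Egs θ p
  rw [theta_pow_p θ hθ, sub_self] at h
  exact (mul_eq_zero.mp h).resolve_left (kappa_ne_zero θ hp hθ)

lemma mem_pid_iff {z : 𝒪 p K} : z ∈ pid p K θ ↔ (θ - 1) ∣ z := Ideal.mem_span_singleton

lemma theta_pow_sub_one_mem (k : ℕ) : θ ^ k - 1 ∈ pid p K θ :=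
  (mem_pid_iff θ).mpr ⟨Egs θ k, (kappa_mul_Egs θ k).symm⟩

lemma Egs_sub_cast_mem (k : ℕ) : Egs θ k - (k : 𝒪 p K) ∈ pid p K θ := by
  have h : Egs θ k - (k : 𝒪 p K) = ∑ m ∈ Finset.range k, (θ ^ m - 1) := by
    rw [Finset.sum_sub_distrib, Egs]
    simp
  rw [h]
  exact Ideal.sum_mem _ fun m _ => theta_pow_sub_one_mem θ m

lemma p_mem_pid (hp : 5 ≤ p) (hθ : IsPrimitiveRoot (θ : K) p) :
    ((p : ℕ) : 𝒪 p K) ∈ pid p K θ := by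
  have h := Egs_sub_cast_mem θ p
  rw [Egs_p θ hp hθ, zero_sub] at h
  simpa using (pid p K θ).neg_mem h

variable (σ : ℤ → (K →ₐ[ℚ_[p]] K))

/-- `σ_j` restricted to the maximal order. -/
noncomputable def sig (j : ℤ) (u : 𝒪 p K) : 𝒪 p K :=
  ⟨σ j (u : K), (show IsIntegral ℤ_[p] (u : K) from u.2).map ((σ j).restrictScalars ℤ_[p])⟩

@[simp] lemma coe_sig (j : ℤ) (u : 𝒪 p K) : (sig σ j u : K) = σ j (u : K) := rfl

lemma sig_eq_aeval {j : ℤ} {c : ℕ} (h : σ j (θ : K) = (θ : K) ^ c)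
    {u : 𝒪 p K} {q : Polynomial ℤ_[p]} (hq : Polynomial.aeval ((θ : K)) q = (u : K)) :
    sig σ j u = Polynomial.aeval (θ ^ c) q := by
  apply Subtype.ext
  have h1 : ((Polynomial.aeval (θ ^ c) q : 𝒪 p K) : K)
      = Polynomial.aeval ((θ : K) ^ c) q := by
    calc ((Polynomial.aeval (θ ^ c) q : 𝒪 p K) : K)
        = (𝒪 p K).val (Polynomial.aeval (θ ^ c) q) := rfl
      _ = Polynomial.aeval ((𝒪 p K).val (θ ^ c)) q :=
          (Polynomial.aeval_algHom_apply _ _ _).symm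
      _ = Polynomial.aeval ((θ : K) ^ c) q := by norm_cast
  have h2 := Polynomial.aeval_algHom_apply ((σ j).restrictScalars ℤ_[p]) ((θ : K)) q
  simp only [AlgHom.coe_restrictScalars'] at h2
  rw [coe_sig, h1, ← hq, ← h2, h]

lemma sig_congr (hp : 5 ≤ p) (hθ : IsPrimitiveRoot (θ : K) p)
    (hgen : Algebra.adjoin ℚ_[p] {(θ : K)} = ⊤)
    {j1 j2 : ℤ} {c d : ℕ} (h1 : σ j1 (θ : K) = (θ : K) ^ c)
    (h2 : σ j2 (θ : K) = (θ : K) ^ d) (u : 𝒪 p K) :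
    sig σ j1 u - sig σ j2 u ∈ pid p K θ := by
  obtain ⟨q, hq⟩ : ∃ q : Polynomial ℤ_[p], Polynomial.aeval ((θ : K)) q = (u : K) := by
    have h := integral_mem_adjoin hp hθ hgen (show IsIntegral ℤ_[p] (u : K) from u.2)
    rw [Algebra.adjoin_singleton_eq_range_aeval] at h
    obtain ⟨q, hq⟩ := h
    exact ⟨q, hq⟩
  rw [sig_eq_aeval θ σ h1 hq, sig_eq_aeval θ σ h2 hq, mem_pid_iff]
  have hdvd : (θ ^ c - θ ^ d) ∣ (Polynomial.aeval (θ ^ c) q - Polynomial.aeval (θ ^ d) q) := by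
    simp only [Polynomial.aeval_def, Polynomial.eval₂_eq_eval_map]
    exact Polynomial.sub_dvd_eval_sub _ _ _
  refine dvd_trans ?_ hdvd
  have h3 : θ ^ c - θ ^ d = (θ - 1) * (Egs θ c - Egs θ d) := by
    rw [mul_sub, kappa_mul_Egs, kappa_mul_Egs]
    ring
  exact ⟨Egs θ c - Egs θ d, h3⟩

lemma isUnit_of_unit_residue (hp : 5 ≤ p) (hθ : IsPrimitiveRoot (θ : K) p)
    (x : 𝒪 p K) (m : ℤ) (hm : ¬ ((p : ℤ) ∣ m)) (hx : x - (m : 𝒪 p K) ∈ pid p K θ) :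
    IsUnit x := by
  by_contra hu
  obtain ⟨M, hM, hxM⟩ := exists_max_ideal_of_mem_nonunits (mem_nonunits_iff.mpr hu)
  haveI := hM
  -- `p ∈ M`
  have hpM : ((p : ℕ) : 𝒪 p K) ∈ M := by
    have hcom : (M.comap (algebraMap ℤ_[p] (𝒪 p K))).IsMaximal :=
      Ideal.isMaximal_comap_of_isIntegral_of_isMaximal M
    have heq : M.comap (algebraMap ℤ_[p] (𝒪 p K)) = IsLocalRing.maximalIdeal ℤ_[p] :=
      IsLocalRing.eq_maximalIdeal hcom
    have hpmem : (p : ℤ_[p]) ∈ M.comap (algebraMap ℤ_[p] (𝒪 p K)) := by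
      rw [heq, PadicInt.maximalIdeal_eq_span_p]
      exact Ideal.subset_span rfl
    have := Ideal.mem_comap.mp hpmem
    rwa [map_natCast] at this
  -- `θ - 1 ∈ M` by the Frobenius argument
  have hθM : θ - 1 ∈ M := by
    set R := 𝒪 p K ⧸ M with hR
    letI : Field R := Ideal.Quotient.field M
    have hpR : ((p : ℕ) : R) = 0 := by
      rw [← map_natCast (Ideal.Quotient.mk M)]
      exact Ideal.Quotient.eq_zero_iff_mem.mpr hpM
    have hchar : ringChar R = p := by
      rcases ((Fact.out : p.Prime).eq_one_or_self_of_dvd _ (ringChar.dvd hpR)) with h | h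
      · exact absurd h CharP.ringChar_ne_one
      · exact h
    haveI : CharP R p := ringChar.of_eq hchar
    have h0 : (Ideal.Quotient.mk M (θ - 1)) ^ p = 0 := by
      rw [map_sub, map_one, sub_pow_char, one_pow, ← map_pow, theta_pow_p θ hθ, map_one,
        sub_self]
    have h1 : Ideal.Quotient.mk M (θ - 1) = 0 :=
      pow_eq_zero_iff (n := p) (by omega) |>.mp h0
    exact Ideal.Quotient.eq_zero_iff_mem.mp h1
  have hPM : pid p K θ ≤ M := by
    rw [pid, Ideal.span_le]
    simpa using hθM
  have hmM : ((m : ℤ) : 𝒪 p K) ∈ M := by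
    have h := M.sub_mem hxM (hPM hx)
    simpa using h
  obtain ⟨u', v', huv⟩ : ∃ u' v' : ℤ, u' * m + v' * p = 1 := by
    have hcop : IsCoprime (m : ℤ) (p : ℤ) := by
      rw [Int.isCoprime_iff_gcd_eq_one]
      have hcp : Nat.Coprime p m.natAbs :=
        (Nat.Prime.coprime_iff_not_dvd Fact.out).mpr
          (fun hd => hm (Int.natCast_dvd_natCast.mpr hd |>.trans (Int.natAbs_dvd.mpr dvd_rfl)))
      simpa [Int.gcd, Int.natAbs_natCast] using hcp.symm
    obtain ⟨u', v', h⟩ := hcop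
    exact ⟨u', v', h⟩
  have h1M : (1 : 𝒪 p K) ∈ M := by
    have hcast : ((1 : ℤ) : 𝒪 p K) = ((u' * m + v' * p : ℤ) : 𝒪 p K) := by rw [huv]
    push_cast at hcast
    rw [hcast]
    refine M.add_mem (M.mul_mem_left _ hmM) (M.mul_mem_left _ ?_)
    exact_mod_cast hpM
  exact hM.ne_top (M.eq_top_iff_one.mpr h1M)

end MaximalClassFrame

namespace MaximalClassFrame

lemma order_aux_le {F : Type*} [Field F] {A B : F} (hA : A ≠ 0) (hB : B ≠ 0)
    {i j : ℕ} (hij : j ≤ i) :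
    ((orderOf (A * B⁻¹) : ℤ) ∣ (i : ℤ) - (j : ℤ)) ↔ A ^ i * B ^ j = B ^ i * A ^ j := by
  obtain ⟨d, rfl⟩ : ∃ d, i = j + d := ⟨i - j, by omega⟩
  have h1 : ((j + d : ℕ) : ℤ) - (j : ℤ) = ((d : ℕ) : ℤ) := by push_cast; ring
  rw [h1, Int.natCast_dvd_natCast, orderOf_dvd_iff_pow_eq_one, mul_pow, inv_pow,
    mul_inv_eq_one₀ (pow_ne_zero d hB)]
  constructor
  · intro h
    rw [pow_add, pow_add, h]
    ring
  · intro h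
    have h2 : A ^ d * (A ^ j * B ^ j) = B ^ d * (A ^ j * B ^ j) := by
      rw [pow_add, pow_add] at h
      linear_combination h
    exact mul_right_cancel₀ (mul_ne_zero (pow_ne_zero j hA) (pow_ne_zero j hB)) h2

lemma order_aux {F : Type*} [Field F] {A B : F} (hA : A ≠ 0) (hB : B ≠ 0) (i j : ℕ) :
    ((orderOf (A * B⁻¹) : ℤ) ∣ (i : ℤ) - (j : ℤ)) ↔ A ^ i * B ^ j = B ^ i * A ^ j := by
  rcases le_total j i with h | h
  · exact order_aux_le hA hB h
  · rw [show (i : ℤ) - j = -((j : ℤ) - i) by ring, dvd_neg, order_aux_le hA hB h]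
    constructor <;> intro hh <;> linear_combination -hh

variable {p : ℕ} [Fact p.Prime]

lemma zmod_facts (hp : 5 ≤ p) {a : ℕ} (ha2 : 2 ≤ a) (ha : a ≤ (p - 1) / 2) :
    (a : ZMod p) ≠ 0 ∧ ((1 : ZMod p) - (a : ZMod p)) ≠ 0 ∧
      ((p + 1 - a : ℕ) : ZMod p) = (1 : ZMod p) - (a : ZMod p) ∧
      ((2 * a - 1 : ℕ) : ZMod p) ≠ 0 := by
  have h2a : 2 * a ≤ p - 1 := by
    have := (Nat.le_div_iff_mul_le (by norm_num : 0 < 2)).mp ha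
    omega
  have hap : a < p := by omega
  have hdvd : ∀ k : ℕ, 0 < k → k < p → ¬ ((k : ZMod p) = 0) := by
    intro k hk1 hk2 hk
    rw [ZMod.natCast_eq_zero_iff] at hk
    exact absurd (Nat.le_of_dvd hk1 hk) (by omega)
  refine ⟨hdvd a (by omega) hap, ?_, ?_, hdvd (2*a-1) (by omega) (by omega)⟩
  · intro h
    have h1 : ((a - 1 : ℕ) : ZMod p) = 0 := by
      rw [Nat.cast_sub (by omega)]
      push_cast
      linear_combination -h
    exact hdvd (a-1) (by omega) (by omega) h1
  · rw [Nat.cast_sub (by omega)]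
    push_cast
    rw [ZMod.natCast_self]
    ring

lemma order_iff_dvd_int (hp : 5 ≤ p) {a : ℕ} (ha2 : 2 ≤ a) (ha : a ≤ (p - 1) / 2) (i j : ℕ) :
    ((orderOf ((a : ZMod p) * ((1 : ZMod p) - (a : ZMod p))⁻¹) : ℤ) ∣ (i : ℤ) - (j : ℤ))
      ↔ (p : ℤ) ∣ ((a : ℤ) ^ i * ((p + 1 - a : ℕ) : ℤ) ^ j
          - ((p + 1 - a : ℕ) : ℤ) ^ i * (a : ℤ) ^ j) := by
  obtain ⟨hA, hB, hcast, -⟩ := zmod_facts hp ha2 ha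
  rw [order_aux hA hB i j, ← ZMod.intCast_zmod_eq_zero_iff_dvd]
  push_cast
  rw [hcast, sub_eq_zero]

lemma m1_not_dvd (hp : 5 ≤ p) {a : ℕ} (ha2 : 2 ≤ a) (ha : a ≤ (p - 1) / 2) {i j : ℕ}
    (hdvd : (p : ℤ) ∣ ((a : ℤ) ^ i * ((p + 1 - a : ℕ) : ℤ) ^ j
      - ((p + 1 - a : ℕ) : ℤ) ^ i * (a : ℤ) ^ j)) :
    ¬ (p : ℤ) ∣ ((a : ℤ) ^ i * ((p + 1 - a : ℕ) : ℤ) ^ j * ((p - a : ℕ) : ℤ)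
        - ((p + 1 - a : ℕ) : ℤ) ^ i * (a : ℤ) ^ j * ((a - 1 : ℕ) : ℤ)) := by
  obtain ⟨hA, hB, hcast, h2a⟩ := zmod_facts hp ha2 ha
  have h2ale : 2 * a ≤ p - 1 := by
    have := (Nat.le_div_iff_mul_le (by norm_num : 0 < 2)).mp ha
    omega
  intro hcon
  rw [← ZMod.intCast_zmod_eq_zero_iff_dvd] at hcon hdvd
  push_cast at hcon hdvd
  rw [hcast] at hcon hdvd
  rw [sub_eq_zero] at hdvd
  have hpa : ((p - a : ℕ) : ZMod p) = -(a : ZMod p) := by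
    rw [Nat.cast_sub (by omega)]
    rw [ZMod.natCast_self]
    ring
  have ha1 : ((a - 1 : ℕ) : ZMod p) = (a : ZMod p) - 1 := by
    rw [Nat.cast_sub (by omega)]
    push_cast
    ring
  rw [hpa, ha1] at hcon
  have key : (a : ZMod p) ^ i * ((1 : ZMod p) - (a : ZMod p)) ^ j
      * (1 - 2 * (a : ZMod p)) = 0 := by
    linear_combination hcon - ((a : ZMod p) - 1) * hdvd
  have h12 : (1 : ZMod p) - 2 * (a : ZMod p) ≠ 0 := by
    intro h
    apply h2a
    rw [Nat.cast_sub (by omega)]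
    push_cast
    linear_combination -h
  exact (mul_ne_zero (mul_ne_zero (pow_ne_zero i hA) (pow_ne_zero j hB)) h12) key

end MaximalClassFrame

namespace MaximalClassFrame
variable {p : ℕ} [Fact p.Prime]
variable {K : Type} [Field K] [Algebra ℚ_[p] K] [Algebra ℤ_[p] K]
  [IsScalarTower ℤ_[p] ℚ_[p] K]
variable (θ : 𝒪 p K) (σ : ℤ → (K →ₐ[ℚ_[p]] K))

lemma sig_one (j : ℤ) : sig σ j (1 : 𝒪 p K) = 1 := by
  apply Subtype.ext
  rw [coe_sig]
  push_cast
  exact map_one _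

lemma sig_theta {j : ℤ} {c : ℕ} (h : σ j (θ : K) = (θ : K) ^ c) :
    sig σ j θ = θ ^ c := by
  apply Subtype.ext
  rw [coe_sig, h]
  push_cast
  rfl

lemma coe_kappa_Egs (k : ℕ) : (((θ - 1) * Egs θ k : 𝒪 p K) : K) = (θ : K) ^ k - 1 := by
  rw [kappa_mul_Egs]
  push_cast
  ring

lemma theta_image_eq {a : ℤ} {ca cb : ℕ}
    (hσa : σ a (θ : K) = (θ : K) ^ ca) (hσb : σ (1 - a) (θ : K) = (θ : K) ^ cb)
    (i j : ℕ) (u v : 𝒪 p K) :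
    thetaMap p K σ a (((θ - 1) ^ i * u : 𝒪 p K) : K) (((θ - 1) ^ j * v : 𝒪 p K) : K)
      = (((θ - 1) ^ (i + j) *
          (Egs θ ca ^ i * Egs θ cb ^ j * sig σ a u * sig σ (1 - a) v
            - Egs θ cb ^ i * Egs θ ca ^ j * sig σ (1 - a) u * sig σ a v) : 𝒪 p K) : K) := by
  have ea := coe_kappa_Egs θ ca
  have eb := coe_kappa_Egs θ cb
  push_cast at ea eb
  simp only [thetaMap]
  push_cast
  simp only [map_mul, map_pow, map_sub, map_one, hσa, hσb, coe_sig]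
  rw [← ea, ← eb]
  simp only [mul_pow]
  ring

lemma res_Egs (k : ℕ) : Ideal.Quotient.mk (pid p K θ) (Egs θ k)
    = ((k : ℕ) : (𝒪 p K ⧸ pid p K θ)) := by
  have h := Ideal.Quotient.eq.mpr (Egs_sub_cast_mem θ k)
  rwa [map_natCast] at h

lemma res_theta : Ideal.Quotient.mk (pid p K θ) θ = 1 := by
  have h : θ - 1 ∈ pid p K θ := Ideal.subset_span rfl
  have h2 := Ideal.Quotient.eq.mpr h
  simpa using h2

end MaximalClassFrame

namespace MaximalClassFrame
variable (p : ℕ) [Fact p.Prime]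
variable (K : Type) [Field K] [Algebra ℚ_[p] K] [Algebra ℤ_[p] K]
  [IsScalarTower ℤ_[p] ℚ_[p] K]
variable (θ : 𝒪 p K) (σ : ℤ → (K →ₐ[ℚ_[p]] K))

/-- The ideal of `𝒪` generated by `{ϑ_a(x,y) : x ∈ 𝔭^i, y ∈ 𝔭^j}`
equals `𝔭^{i+j+ε(i,j)}`, where `ε(i,j) = 1` if `o_a ∣ i−j` and `ε(i,j) = 0` otherwise,
with `o_a` the multiplicative order of `a·(1−a)⁻¹` in `(ℤ/pℤ)ˣ`. -/
theorem frame_theta_images (hp : 5 ≤ p) (hθ : IsPrimitiveRoot (θ : K) p)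
    (hgen : Algebra.adjoin ℚ_[p] {(θ : K)} = ⊤)
    (hσ : ∀ j : ℤ, ¬ ((p : ℤ) ∣ j) → σ j (θ : K) = (θ : K) ^ j)
    (i j : ℕ) (a : ℕ) (ha2 : 2 ≤ a) (ha : a ≤ (p - 1) / 2) :
    Ideal.span {z : 𝒪 p K | ∃ x ∈ pid p K θ ^ i, ∃ y ∈ pid p K θ ^ j,
        (z : K) = thetaMap p K σ (a : ℤ) (x : K) (y : K)}
      = pid p K θ ^ (i + j +
          if ((orderOf ((a : ZMod p) * ((1 : ZMod p) - (a : ZMod p))⁻¹) : ℤ) ∣ (i : ℤ) - (j : ℤ))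
          then 1 else 0) := by
  have h2a : 2 * a ≤ p - 1 := by
    have := (Nat.le_div_iff_mul_le (by norm_num : 0 < 2)).mp ha
    omega
  have hap : a < p := by omega
  have hθne : (θ : K) ≠ 0 := hθ.ne_zero (by omega)
  have hpa : ¬ ((p : ℤ) ∣ ((a : ℕ) : ℤ)) := by
    rw [Int.natCast_dvd_natCast]
    intro h
    exact absurd (Nat.le_of_dvd (by omega) h) (by omega)
  have hpb : ¬ ((p : ℤ) ∣ (1 - ((a : ℕ) : ℤ))) := by
    intro h
    rw [show (1 : ℤ) - (a : ℕ) = -(((a - 1 : ℕ) : ℤ)) by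
        push_cast [Nat.cast_sub (by omega : 1 ≤ a)]; ring,
      dvd_neg, Int.natCast_dvd_natCast] at h
    exact absurd (Nat.le_of_dvd (by omega) h) (by omega)
  have hσa : σ ((a : ℕ) : ℤ) (θ : K) = (θ : K) ^ (a : ℕ) := by
    rw [hσ _ hpa, zpow_natCast]
  have hσb : σ (1 - ((a : ℕ) : ℤ)) (θ : K) = (θ : K) ^ (p + 1 - a) := by
    rw [hσ _ hpb]
    have hz : (θ : K) ^ (((p + 1 - a : ℕ) : ℤ))
        = (θ : K) ^ ((1 : ℤ) - (a : ℕ)) * ((θ : K) ^ (((p : ℕ)) : ℤ)) := by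
      rw [← zpow_add₀ hθne]
      congr 1
      push_cast
      omega
    rw [zpow_natCast, zpow_natCast, hθ.pow_eq_one, mul_one] at hz
    rw [← hz]
  -- abbreviations
  set S : Set (𝒪 p K) := {z : 𝒪 p K | ∃ x ∈ pid p K θ ^ i, ∃ y ∈ pid p K θ ^ j,
      (z : K) = thetaMap p K σ (a : ℤ) (x : K) (y : K)} with hS
  have hxmem : ∀ (k : ℕ) (u : 𝒪 p K), (θ - 1) ^ k * u ∈ pid p K θ ^ k := by
    intro k u
    rw [pid, Ideal.span_singleton_pow, Ideal.mem_span_singleton]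
    exact dvd_mul_right _ _
  have hWmem : ∀ u v : 𝒪 p K,
      (θ - 1) ^ (i + j) *
        (Egs θ a ^ i * Egs θ (p+1-a) ^ j * sig σ ((a:ℕ):ℤ) u * sig σ (1-((a:ℕ):ℤ)) v
          - Egs θ (p+1-a) ^ i * Egs θ a ^ j * sig σ (1-((a:ℕ):ℤ)) u * sig σ ((a:ℕ):ℤ) v)
        ∈ Ideal.span S := by
    intro u v
    exact Ideal.subset_span ⟨(θ-1)^i * u, hxmem i u, (θ-1)^j * v, hxmem j v,
      (theta_image_eq θ σ hσa hσb i j u v).symm⟩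
  have hpR : ((p : ℕ) : 𝒪 p K ⧸ pid p K θ) = 0 := by
    rw [← map_natCast (Ideal.Quotient.mk (pid p K θ))]
    exact Ideal.Quotient.eq_zero_iff_mem.mpr (p_mem_pid θ hp hθ)
  by_cases hcond : ((orderOf ((a : ZMod p) * ((1 : ZMod p) - (a : ZMod p))⁻¹) : ℤ)
      ∣ (i : ℤ) - (j : ℤ))
  · rw [if_pos hcond]
    have hdvd := (order_iff_dvd_int hp ha2 ha i j).mp hcond
    apply le_antisymm
    · rw [Ideal.span_le]
      rintro z ⟨x, hx, y, hy, hz⟩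
      rw [pid, Ideal.span_singleton_pow, Ideal.mem_span_singleton] at hx hy
      obtain ⟨u, rfl⟩ := hx
      obtain ⟨v, rfl⟩ := hy
      rw [theta_image_eq θ σ hσa hσb i j u v] at hz
      have hzO := Subtype.coe_injective hz
      have hWP : (Egs θ a ^ i * Egs θ (p+1-a) ^ j * sig σ ((a:ℕ):ℤ) u * sig σ (1-((a:ℕ):ℤ)) v
          - Egs θ (p+1-a) ^ i * Egs θ a ^ j * sig σ (1-((a:ℕ):ℤ)) u * sig σ ((a:ℕ):ℤ) v)
          ∈ pid p K θ := by
        rw [← Ideal.Quotient.eq_zero_iff_mem]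
        have hsu := Ideal.Quotient.eq.mpr (sig_congr θ σ hp hθ hgen hσa hσb u)
        have hsv := Ideal.Quotient.eq.mpr (sig_congr θ σ hp hθ hgen hσa hσb v)
        obtain ⟨t, ht⟩ := hdvd
        have hfac : ((a:ℕ) : 𝒪 p K ⧸ pid p K θ)^i * ((p+1-a:ℕ) : 𝒪 p K ⧸ pid p K θ)^j
            - ((p+1-a:ℕ) : 𝒪 p K ⧸ pid p K θ)^i * ((a:ℕ) : 𝒪 p K ⧸ pid p K θ)^j = 0 := by
          have hc := congrArg (fun z : ℤ => (z : 𝒪 p K ⧸ pid p K θ)) ht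
          push_cast at hc
          rw [hpR, zero_mul] at hc
          exact hc
        simp only [map_sub, map_mul, map_pow, res_Egs, hsu, hsv]
        linear_combination (Ideal.Quotient.mk (pid p K θ) (sig σ (1-((a:ℕ):ℤ)) u)
          * Ideal.Quotient.mk (pid p K θ) (sig σ (1-((a:ℕ):ℤ)) v)) * hfac
      obtain ⟨W', hW'⟩ := (mem_pid_iff θ).mp hWP
      rw [SetLike.mem_coe, pid, Ideal.span_singleton_pow, Ideal.mem_span_singleton]
      exact ⟨W', by rw [hzO, hW']; ring⟩
    · rw [pid, Ideal.span_singleton_pow, Ideal.span_singleton_le_iff_mem]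
      set W1 : 𝒪 p K := θ * (Egs θ a^i * Egs θ (p+1-a)^j * Egs θ (p-a)
          - Egs θ (p+1-a)^i * Egs θ a^j * Egs θ (a-1)) with hW1
      have hg0 : (θ-1)^(i+j) *
            (Egs θ a ^ i * Egs θ (p+1-a) ^ j * sig σ ((a:ℕ):ℤ) 1 * sig σ (1-((a:ℕ):ℤ)) θ
              - Egs θ (p+1-a) ^ i * Egs θ a ^ j * sig σ (1-((a:ℕ):ℤ)) 1 * sig σ ((a:ℕ):ℤ) θ)
          - θ * ((θ-1)^(i+j) *
            (Egs θ a ^ i * Egs θ (p+1-a) ^ j * sig σ ((a:ℕ):ℤ) 1 * sig σ (1-((a:ℕ):ℤ)) 1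
              - Egs θ (p+1-a) ^ i * Egs θ a ^ j * sig σ (1-((a:ℕ):ℤ)) 1 * sig σ ((a:ℕ):ℤ) 1))
          = (θ-1)^(i+j+1) * W1 := by
        simp only [sig_one, sig_theta θ σ hσa, sig_theta θ σ hσb, one_mul, mul_one, hW1]
        have e3 := kappa_mul_Egs θ (p - a)
        have e4 := kappa_mul_Egs θ (a - 1)
        have epow1 : (θ : 𝒪 p K) ^ (p + 1 - a) = θ * θ ^ (p - a) := by
          rw [← pow_succ']
          congr 1
          omega
        have epow2 : (θ : 𝒪 p K) ^ a = θ * θ ^ (a - 1) := by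
          rw [← pow_succ']
          congr 1
          omega
        rw [epow1, epow2]
        linear_combination (-( (θ-1)^(i+j) * Egs θ a^i * Egs θ (p+1-a)^j * θ)) * e3
          + ((θ-1)^(i+j) * Egs θ (p+1-a)^i * Egs θ a^j * θ) * e4
      have hπW1 : Ideal.Quotient.mk (pid p K θ) W1
          = (((a : ℤ) ^ i * ((p + 1 - a : ℕ) : ℤ) ^ j * ((p - a : ℕ) : ℤ)
              - ((p + 1 - a : ℕ) : ℤ) ^ i * (a : ℤ) ^ j * ((a - 1 : ℕ) : ℤ) : ℤ)
            : 𝒪 p K ⧸ pid p K θ) := by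
        rw [hW1]
        simp only [map_mul, map_sub, map_pow, res_Egs, res_theta]
        push_cast
        ring
      have hunit : IsUnit W1 := by
        refine isUnit_of_unit_residue θ hp hθ W1 _ (m1_not_dvd hp ha2 ha hdvd) ?_
        refine Ideal.Quotient.eq.mp ?_
        rw [hπW1, map_intCast]
      obtain ⟨w, hw⟩ := hunit
      have hg0mem : (θ-1)^(i+j+1) * W1 ∈ Ideal.span S := by
        rw [← hg0]
        exact Ideal.sub_mem _ (hWmem 1 θ) (Ideal.mul_mem_left _ θ (hWmem 1 1))
      have hkey : (θ-1)^(i+j+1) = ((w⁻¹ : (𝒪 p K)ˣ) : 𝒪 p K) * ((θ-1)^(i+j+1) * W1) := by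
        rw [← hw, mul_comm (((w⁻¹ : (𝒪 p K)ˣ) : 𝒪 p K)) _, mul_assoc, Units.mul_inv, mul_one]
      rw [hkey]
      exact Ideal.mul_mem_left _ _ hg0mem
  · rw [if_neg hcond]
    have hm0 : ¬ (p : ℤ) ∣ ((a : ℤ) ^ i * ((p + 1 - a : ℕ) : ℤ) ^ j
        - ((p + 1 - a : ℕ) : ℤ) ^ i * (a : ℤ) ^ j) :=
      fun h => hcond ((order_iff_dvd_int hp ha2 ha i j).mpr h)
    rw [add_zero]
    apply le_antisymm
    · rw [Ideal.span_le]
      rintro z ⟨x, hx, y, hy, hz⟩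
      rw [pid, Ideal.span_singleton_pow, Ideal.mem_span_singleton] at hx hy
      obtain ⟨u, rfl⟩ := hx
      obtain ⟨v, rfl⟩ := hy
      rw [theta_image_eq θ σ hσa hσb i j u v] at hz
      have hzO := Subtype.coe_injective hz
      rw [SetLike.mem_coe, pid, Ideal.span_singleton_pow, Ideal.mem_span_singleton]
      exact ⟨_, hzO⟩
    · rw [pid, Ideal.span_singleton_pow, Ideal.span_singleton_le_iff_mem]
      set W0 : 𝒪 p K := Egs θ a ^ i * Egs θ (p+1-a) ^ j * sig σ ((a:ℕ):ℤ) 1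
            * sig σ (1-((a:ℕ):ℤ)) 1
          - Egs θ (p+1-a) ^ i * Egs θ a ^ j * sig σ (1-((a:ℕ):ℤ)) 1 * sig σ ((a:ℕ):ℤ) 1
        with hW0
      have hπW0 : Ideal.Quotient.mk (pid p K θ) W0
          = (((a : ℤ) ^ i * ((p + 1 - a : ℕ) : ℤ) ^ j
              - ((p + 1 - a : ℕ) : ℤ) ^ i * (a : ℤ) ^ j : ℤ) : 𝒪 p K ⧸ pid p K θ) := by
        rw [hW0]
        simp only [sig_one, map_mul, map_sub, map_pow, map_one, res_Egs, mul_one]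
        push_cast
        ring
      have hunit : IsUnit W0 := by
        refine isUnit_of_unit_residue θ hp hθ W0 _ hm0 ?_
        refine Ideal.Quotient.eq.mp ?_
        rw [hπW0, map_intCast]
      obtain ⟨w, hw⟩ := hunit
      have hg0mem : (θ-1)^(i+j) * W0 ∈ Ideal.span S := by
        rw [hW0]
        exact hWmem 1 1
      have hkey : (θ-1)^(i+j) = ((w⁻¹ : (𝒪 p K)ˣ) : 𝒪 p K) * ((θ-1)^(i+j) * W0) := by
        rw [← hw, mul_comm (((w⁻¹ : (𝒪 p K)ˣ) : 𝒪 p K)) _, mul_assoc, Units.mul_inv, mul_one]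
      rw [hkey]
      exact Ideal.mul_mem_left _ _ hg0mem

end MaximalClassFrame
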